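/- Let 𝔤 be a Lie algebra, M a right 𝔤-representation, and α : M → 𝔤 a 𝔤-equivariant map (a Lie algebra object in the Loday–Pirashvili category LM). Then the formulas g·(x ⊗ m) = gx ⊗ m and (x ⊗ m)·g = xg ⊗ m + x ⊗ [m,g] define a U(𝔤)-bimodule structure on U(𝔤) ⊗ M, where U(𝔤) is the universal enveloping algebra of 𝔤. -/

import Mathlib

section

attribute [local instance 100] LieRing.ofAssociativeRing

open MulOpposite TensorProduct UniversalEnvelopingAlgebra in
/-- The linear map `g ↦ (x ⊗ m ↦ x·ι g ⊗ m + x ⊗ [m,g])`. -/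
noncomputable def LMauxD {K : Type*} [CommRing K] {L : Type*} [LieRing L] [LieAlgebra K L]
    {M : Type*} [AddCommGroup M] [Module K M] (ract : M →ₗ[K] L →ₗ[K] M) :
    L →ₗ[K] Module.End K (UniversalEnvelopingAlgebra K L ⊗[K] M) :=
  (LinearMap.rTensorHom M).comp
      ((LinearMap.mul K (UniversalEnvelopingAlgebra K L)).flip.comp (ι K).toLinearMap)
    + (LinearMap.lTensorHom (UniversalEnvelopingAlgebra K L)).comp ract.flip

open MulOpposite TensorProduct UniversalEnvelopingAlgebra in
theorem LMauxD_apply {K : Type*} [CommRing K] {L : Type*} [LieRing L] [LieAlgebra K L]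
    {M : Type*} [AddCommGroup M] [Module K M] (ract : M →ₗ[K] L →ₗ[K] M) (g : L)
    (x : UniversalEnvelopingAlgebra K L) (m : M) :
    LMauxD ract g (x ⊗ₜ[K] m) = (x * ι K g) ⊗ₜ[K] m + x ⊗ₜ[K] ract m g := rfl

open MulOpposite TensorProduct UniversalEnvelopingAlgebra in
theorem LMauxD_lie {K : Type*} [CommRing K] {L : Type*} [LieRing L] [LieAlgebra K L]
    {M : Type*} [AddCommGroup M] [Module K M] (ract : M →ₗ[K] L →ₗ[K] M)
    (hract : ∀ (m : M) (g g' : L),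
      ract m ⁅g, g'⁆ = ract (ract m g) g' - ract (ract m g') g) (g g' : L) :
    LMauxD ract ⁅g, g'⁆ = LMauxD ract g' * LMauxD ract g - LMauxD ract g * LMauxD ract g' := by
  apply TensorProduct.ext'
  intro x m
  have h1 : (LMauxD ract g' * LMauxD ract g - LMauxD ract g * LMauxD ract g') (x ⊗ₜ[K] m)
      = LMauxD ract g' (LMauxD ract g (x ⊗ₜ[K] m))
        - LMauxD ract g (LMauxD ract g' (x ⊗ₜ[K] m)) := rfl
  rw [h1, LMauxD_apply, LMauxD_apply]
  simp only [map_add, LMauxD_apply, LieHom.map_lie, LieRing.of_associative_ring_bracket,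
    hract m g g', tmul_sub, mul_sub, sub_tmul, mul_assoc]
  abel

open MulOpposite TensorProduct UniversalEnvelopingAlgebra in
/-- The Lie algebra morphism into the opposite of the endomorphism algebra. -/
noncomputable def LMauxLie {K : Type*} [CommRing K] {L : Type*} [LieRing L] [LieAlgebra K L]
    {M : Type*} [AddCommGroup M] [Module K M] (ract : M →ₗ[K] L →ₗ[K] M)
    (hract : ∀ (m : M) (g g' : L),
      ract m ⁅g, g'⁆ = ract (ract m g) g' - ract (ract m g') g) :
    L →ₗ⁅K⁆ (Module.End K (UniversalEnvelopingAlgebra K L ⊗[K] M))ᵐᵒᵖ where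
  toLinearMap := (opLinearEquiv K).toLinearMap ∘ₗ LMauxD ract
  map_lie' := by
    intro g g'
    show op (LMauxD ract ⁅g, g'⁆) = ⁅op (LMauxD ract g), op (LMauxD ract g')⁆
    rw [LieRing.of_associative_ring_bracket]
    apply unop_injective
    simp only [unop_sub, unop_mul, unop_op]
    exact LMauxD_lie ract hract g g'

end

set_option maxHeartbeats 1000000 in
set_option synthInstance.maxHeartbeats 400000 in
open MulOpposite TensorProduct in
/-- Let `𝔤` be a Lie algebra, `M` a right `𝔤`-representation and `α : M → 𝔤` a
`𝔤`-equivariant map (a Lie algebra object in the Loday–Pirashvili category `LM`).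
Then `g·(x ⊗ m) = gx ⊗ m` and `(x ⊗ m)·g = xg ⊗ m + x ⊗ [m,g]` define a
`U(𝔤)`-bimodule structure on `U(𝔤) ⊗ M`: the right action extends (uniquely) to an
algebra map `U(𝔤)ᵐᵒᵖ → End(U(𝔤) ⊗ M)` commuting with the left multiplications. -/
theorem LM_lie_object_bimodule {K : Type*} [CommRing K]
    {L : Type*} [LieRing L] [LieAlgebra K L]
    {M : Type*} [AddCommGroup M] [Module K M]
    (ract : M →ₗ[K] L →ₗ[K] M)
    (hract : ∀ (m : M) (g g' : L),
      ract m ⁅g, g'⁆ = ract (ract m g) g' - ract (ract m g') g)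
    (α : M →ₗ[K] L)
    (hα : ∀ (m : M) (g : L), α (ract m g) = ⁅α m, g⁆) :
    ∃! ρ : (UniversalEnvelopingAlgebra K L)ᵐᵒᵖ →ₐ[K]
        Module.End K (UniversalEnvelopingAlgebra K L ⊗[K] M),
      (∀ (g : L) (x : UniversalEnvelopingAlgebra K L) (m : M),
        ρ (op (UniversalEnvelopingAlgebra.ι K g)) (x ⊗ₜ[K] m) =
          (x * UniversalEnvelopingAlgebra.ι K g) ⊗ₜ[K] m + x ⊗ₜ[K] ract m g)
      ∧ (∀ (u : UniversalEnvelopingAlgebra K L)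
          (w : (UniversalEnvelopingAlgebra K L)ᵐᵒᵖ),
          (ρ w) ∘ₗ LinearMap.rTensor M (LinearMap.mulLeft K u) =
            LinearMap.rTensor M (LinearMap.mulLeft K u) ∘ₗ (ρ w)) := by
  classical
  letI iR : Ring (Module.End K (UniversalEnvelopingAlgebra K L ⊗[K] M))ᵐᵒᵖ :=
    @MulOpposite.instRing _ (@Module.End.instRing K _ _ TensorProduct.addCommGroup _)
  letI : LieRing (Module.End K (UniversalEnvelopingAlgebra K L ⊗[K] M))ᵐᵒᵖ :=
    LieRing.ofAssociativeRing
  letI : LieAlgebra K (Module.End K (UniversalEnvelopingAlgebra K L ⊗[K] M))ᵐᵒᵖ :=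
    LieAlgebra.ofAssociativeAlgebra
  set U := UniversalEnvelopingAlgebra K L with hU
  set ιK := UniversalEnvelopingAlgebra.ι K (L := L) with hι
  let φ : U →ₐ[K] (Module.End K (U ⊗[K] M))ᵐᵒᵖ :=
    UniversalEnvelopingAlgebra.lift K (LMauxLie ract hract)
  let ρ : Uᵐᵒᵖ →ₐ[K] Module.End K (U ⊗[K] M) := AlgHom.opComm φ
  have hρ : ∀ w : Uᵐᵒᵖ, ρ w = unop (φ (unop w)) := fun w => rfl
  have hφι : ∀ g : L, φ (ιK g) = op (LMauxD ract g) := by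
    intro g
    show UniversalEnvelopingAlgebra.lift K (LMauxLie ract hract)
      (UniversalEnvelopingAlgebra.ι K g) = _
    rw [UniversalEnvelopingAlgebra.lift_ι_apply]
    rfl
  have hρι : ∀ g : L, ρ (op (ιK g)) = LMauxD ract g := by
    intro g
    rw [hρ, unop_op, hφι, unop_op]
  refine ⟨ρ, ⟨?_, ?_⟩, ?_⟩
  · intro g x m
    rw [hρι g, LMauxD_apply]
  · -- commutation with left multiplications
    intro u w
    set T : U ⊗[K] M →ₗ[K] U ⊗[K] M := LinearMap.rTensor M (LinearMap.mulLeft K u) with hT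
    have hTtmul : ∀ (x : U) (m : M), T (x ⊗ₜ[K] m) = (u * x) ⊗ₜ[K] m := fun x m => rfl
    have hDT : ∀ g : L, LMauxD ract g * T = T * LMauxD ract g := by
      intro g
      apply TensorProduct.ext'
      intro x m
      show LMauxD ract g (T (x ⊗ₜ[K] m)) = T (LMauxD ract g (x ⊗ₜ[K] m))
      rw [hTtmul, LMauxD_apply, LMauxD_apply, map_add, hTtmul, hTtmul, mul_assoc]
    set Z : Subalgebra K (Module.End K (U ⊗[K] M))ᵐᵒᵖ :=
      Subalgebra.centralizer K {op T} with hZ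
    have hmem : ∀ g : L, (LMauxLie ract hract g : (Module.End K (U ⊗[K] M))ᵐᵒᵖ) ∈ Z := by
      intro g
      rw [hZ, Subalgebra.mem_centralizer_iff]
      rintro s hs
      rcases Set.mem_singleton_iff.mp hs with rfl
      show op T * op (LMauxD ract g) = op (LMauxD ract g) * op T
      apply unop_injective
      simp only [unop_mul, unop_op]
      exact hDT g
    letI zR : Ring Z := @Subalgebra.toRing K _ _
      (@MulOpposite.instRing _ (@Module.End.instRing K _ _ TensorProduct.addCommGroup _)) _ Z
    letI : LieRing Z := @LieRing.ofAssociativeRing Z zR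
    letI : LieAlgebra K Z := @LieAlgebra.ofAssociativeAlgebra Z zR K _ Z.algebra
    let fLie' : L →ₗ⁅K⁆ Z :=
      { toFun := fun g => ⟨LMauxLie ract hract g, hmem g⟩
        map_add' := by intro g g'; apply Subtype.ext; simp
        map_smul' := by intro c g; apply Subtype.ext; simp
        map_lie' := by
          intro g g'
          apply Subtype.ext
          show (LMauxLie ract hract ⁅g, g'⁆ : (Module.End K (U ⊗[K] M))ᵐᵒᵖ)
            = (⁅(⟨LMauxLie ract hract g, hmem g⟩ : Z), ⟨LMauxLie ract hract g', hmem g'⟩⁆ : Z)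
          rw [LieHom.map_lie]
          rfl }
    have hψ : Z.val.comp (UniversalEnvelopingAlgebra.lift K fLie') = φ := by
      apply UniversalEnvelopingAlgebra.hom_ext
      apply LieHom.ext
      intro g
      show Z.val (UniversalEnvelopingAlgebra.lift K fLie'
        (UniversalEnvelopingAlgebra.ι K g)) = φ (UniversalEnvelopingAlgebra.ι K g)
      rw [UniversalEnvelopingAlgebra.lift_ι_apply]
      rw [hφι g]
      rfl
    have hmemφ : φ (unop w) ∈ Z := by
      rw [← hψ]
      exact (UniversalEnvelopingAlgebra.lift K fLie' (unop w)).2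
    have hcomm : op T * φ (unop w) = φ (unop w) * op T := by
      rw [hZ, Subalgebra.mem_centralizer_iff] at hmemφ
      exact hmemφ (op T) rfl
    have : ρ w * T = T * ρ w := by
      have := congrArg unop hcomm
      simpa only [unop_mul, unop_op, hρ] using this
    exact this
  · -- uniqueness
    intro ρ' hρ'
    have key : ∀ g : L, ρ' (op (ιK g)) = LMauxD ract g := by
      intro g
      apply TensorProduct.ext'
      intro x m
      rw [hρ'.1 g x m, LMauxD_apply]
    have hσ : AlgHom.opComm.symm ρ' = φ := by
      apply UniversalEnvelopingAlgebra.hom_ext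
      apply LieHom.ext
      intro g
      show AlgHom.opComm.symm ρ' (UniversalEnvelopingAlgebra.ι K g)
        = φ (UniversalEnvelopingAlgebra.ι K g)
      have h1 : AlgHom.opComm.symm ρ' (UniversalEnvelopingAlgebra.ι K g)
          = op (ρ' (op (UniversalEnvelopingAlgebra.ι K g))) := rfl
      rw [h1, key g, hφι g]
    calc ρ' = AlgHom.opComm (AlgHom.opComm.symm ρ') := (Equiv.apply_symm_apply _ _).symm
      _ = AlgHom.opComm φ := by rw [hσ]
      _ = ρ := rfl
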